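/- If J ∈ End(W ⊕ W*) satisfies J² = −Id and g(𝒳, J𝒴) + g(J𝒳, 𝒴) = 0 for all 𝒳,𝒴, then the dimension of W is even. -/

import Mathlib

open Filter Topology Matrix

/-- If `t • 1 - M` is invertible for all `t > 0`, then `det (-M) ≥ 0`. -/
lemma det_neg_nonneg_of_no_pos_eigen {m : Type*} [Fintype m] [DecidableEq m]
    (M : Matrix m m ℝ) (h : ∀ t : ℝ, 0 < t → (t • (1 : Matrix m m ℝ) - M).det ≠ 0) :
    0 ≤ (-M).det := by
  set f : ℝ → ℝ := fun t => (t • (1 : Matrix m m ℝ) - M).det with hf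
  have hcont : Continuous f := by
    apply Continuous.matrix_det
    exact (continuous_id.smul continuous_const).sub continuous_const
  have htend : Tendsto (fun t : ℝ => ((1 : Matrix m m ℝ) - t⁻¹ • M).det)
      atTop (nhds 1) := by
    have hc : Continuous fun c : ℝ => ((1 : Matrix m m ℝ) - c • M).det :=
      Continuous.matrix_det (continuous_const.sub (continuous_id.smul continuous_const))
    have := (hc.tendsto 0).comp tendsto_inv_atTop_zero
    simpa [Function.comp_def] using this
  have hev : ∀ᶠ t in atTop, 0 < f t := by
    have h1 : ∀ᶠ t in atTop, 0 < ((1 : Matrix m m ℝ) - t⁻¹ • M).det :=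
      htend.eventually (eventually_gt_nhds one_pos)
    filter_upwards [h1, eventually_gt_atTop (0 : ℝ)] with t h1t ht
    have key : f t = t ^ Fintype.card m * ((1 : Matrix m m ℝ) - t⁻¹ • M).det := by
      rw [hf, ← Matrix.det_smul, smul_sub, smul_smul, mul_inv_cancel₀ ht.ne', one_smul]
    rw [key]
    positivity
  have hpos : ∀ t : ℝ, 0 < t → 0 < f t := by
    intro t ht
    rcases (h t ht).lt_or_gt with hlt | hgt
    · exfalso
      obtain ⟨u, hu, hut⟩ := (hev.and (eventually_ge_atTop t)).exists
      obtain ⟨c, hc, hfc⟩ := intermediate_value_Icc hut hcont.continuousOn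
        (a := t) (b := u) ⟨hlt.le, hu.le⟩
      exact h c (lt_of_lt_of_le ht hc.1) hfc
    · exact hgt
  have htend0 : Tendsto f (nhdsWithin 0 (Set.Ioi 0)) (nhds (f 0)) :=
    (hcont.tendsto 0).mono_left nhdsWithin_le_nhds
  have h0 : 0 ≤ f 0 := by
    refine ge_of_tendsto htend0 ?_
    filter_upwards [self_mem_nhdsWithin] with t ht
    exact (hpos t ht).le
  simpa [hf] using h0

/-- If `t • 1 - M` is invertible for all real `t`, then `det (-M) > 0`. -/
lemma det_neg_pos_of_no_eigen {m : Type*} [Fintype m] [DecidableEq m]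
    (M : Matrix m m ℝ) (h : ∀ t : ℝ, (t • (1 : Matrix m m ℝ) - M).det ≠ 0) :
    0 < (-M).det := by
  have h0 := det_neg_nonneg_of_no_pos_eigen M (fun t _ => h t)
  have h1 := h 0
  rw [zero_smul, zero_sub] at h1
  exact h0.lt_of_ne (Ne.symm h1)

/-- The neutral metric `g((X,α),(Y,μ)) = (α(Y) + μ(X))/2` on `W ⊕ W*`. -/
noncomputable def neutralMetric (W : Type*) [AddCommGroup W] [Module ℝ W] :
    (W × Module.Dual ℝ W) → (W × Module.Dual ℝ W) → ℝ :=
  fun p q => (p.2 q.1 + q.2 p.1) / 2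

/-- The neutral metric as a bilinear map. -/
noncomputable def neutralBilin (W : Type*) [AddCommGroup W] [Module ℝ W] :
    (W × Module.Dual ℝ W) →ₗ[ℝ] (W × Module.Dual ℝ W) →ₗ[ℝ] ℝ :=
  LinearMap.mk₂ ℝ (neutralMetric W)
    (by intros; simp [neutralMetric, _root_.map_add]; ring)
    (by intros; simp [neutralMetric, _root_.map_smul, smul_eq_mul]; ring)
    (by intros; simp [neutralMetric, _root_.map_add]; ring)
    (by intros; simp [neutralMetric, _root_.map_smul, smul_eq_mul]; ring)

section AuxBasis

variable {W : Type*} [AddCommGroup W] [Module ℝ W] [FiniteDimensional ℝ W]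

/-- The linear map `(x, α) ↦ (x + ♯α, ♭x - α)` built from a basis of `W`. -/
noncomputable def gcLmap (b : Module.Basis (Fin (Module.finrank ℝ W)) ℝ W) :
    (W × Module.Dual ℝ W) →ₗ[ℝ] (W × Module.Dual ℝ W) :=
  LinearMap.prod
    (LinearMap.fst ℝ W _ + (b.toDualEquiv.symm : Module.Dual ℝ W →ₗ[ℝ] W) ∘ₗ LinearMap.snd ℝ W _)
    ((b.toDualEquiv : W →ₗ[ℝ] Module.Dual ℝ W) ∘ₗ LinearMap.fst ℝ W _ - LinearMap.snd ℝ W _)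

lemma gcLmap_apply (b : Module.Basis (Fin (Module.finrank ℝ W)) ℝ W) (x : W) (α : Module.Dual ℝ W) :
    gcLmap b (x, α) = (x + b.toDualEquiv.symm α, b.toDualEquiv x - α) := by
  simp [gcLmap]

lemma gcLmap_gcLmap (b : Module.Basis (Fin (Module.finrank ℝ W)) ℝ W) (p : W × Module.Dual ℝ W) :
    gcLmap b (gcLmap b p) = (2:ℝ) • p := by
  obtain ⟨x, α⟩ := p
  have h1 : ∀ y : W, b.toDualEquiv.symm (b.toDual y) = y :=
    fun y => b.toDualEquiv.symm_apply_apply y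
  have h2 : ∀ β, b.toDual (b.toDualEquiv.symm β) = β :=
    fun β => b.toDualEquiv.apply_symm_apply β
  rw [gcLmap_apply, gcLmap_apply]
  ext
  · simp [_root_.map_add, _root_.map_sub, two_smul, h1, h2]
    try abel
  · simp [_root_.map_add, _root_.map_sub, two_smul, h1, h2]
    try abel

/-- `gcLmap` as a linear equivalence (its square is `2 • id`). -/
noncomputable def gcLequiv (b : Module.Basis (Fin (Module.finrank ℝ W)) ℝ W) :
    (W × Module.Dual ℝ W) ≃ₗ[ℝ] (W × Module.Dual ℝ W) :=
  LinearEquiv.ofLinear (gcLmap b) ((2:ℝ)⁻¹ • gcLmap b)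
    (by
      apply LinearMap.ext
      intro p
      show gcLmap b ((2:ℝ)⁻¹ • gcLmap b p) = p
      rw [_root_.map_smul, gcLmap_gcLmap, smul_smul]
      norm_num)
    (by
      apply LinearMap.ext
      intro p
      show (2:ℝ)⁻¹ • gcLmap b (gcLmap b p) = p
      rw [gcLmap_gcLmap, smul_smul]
      norm_num)

/-- A basis of `W × W*` in which the neutral metric is `diag(1, …, 1, -1, …, -1)`. -/
noncomputable def gcBasis (b : Module.Basis (Fin (Module.finrank ℝ W)) ℝ W) :
    Module.Basis (Fin (Module.finrank ℝ W) ⊕ Fin (Module.finrank ℝ W)) ℝ (W × Module.Dual ℝ W) :=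
  (b.prod b.dualBasis).map (gcLequiv b)

lemma gcBasis_inl (b : Module.Basis (Fin (Module.finrank ℝ W)) ℝ W) (i) :
    gcBasis b (Sum.inl i) = (b i, b.dualBasis i) := by
  have h1 : ∀ y : W, b.toDualEquiv.symm (b.toDual y) = y :=
    fun y => b.toDualEquiv.symm_apply_apply y
  simp [gcBasis, gcLequiv, Module.Basis.prod_apply, gcLmap_apply, Module.Basis.dualBasis, h1]

lemma gcBasis_inr (b : Module.Basis (Fin (Module.finrank ℝ W)) ℝ W) (i) :
    gcBasis b (Sum.inr i) = (b i, -b.dualBasis i) := by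
  have h1 : ∀ y : W, b.toDualEquiv.symm (b.toDual y) = y :=
    fun y => b.toDualEquiv.symm_apply_apply y
  simp [gcBasis, gcLequiv, Module.Basis.prod_apply, gcLmap_apply, Module.Basis.dualBasis, h1]

lemma toMatrix_neutralBilin (b : Module.Basis (Fin (Module.finrank ℝ W)) ℝ W) :
    LinearMap.toMatrix₂ (gcBasis b) (gcBasis b) (neutralBilin W) =
      Matrix.fromBlocks 1 0 0 (-1) := by
  ext i j
  rcases i with i | i <;> rcases j with j | j <;>
    rw [LinearMap.toMatrix₂_apply] <;>
    simp only [gcBasis_inl, gcBasis_inr] <;>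
    show neutralMetric W _ _ = _ <;>
    simp [neutralMetric, Module.Basis.dualBasis, Module.Basis.toDual_apply, Matrix.one_apply] <;>
    split_ifs with h <;>
    simp_all <;> ring

end AuxBasis

/-- If `J` is an endomorphism of `W ⊕ W*` with `J² = -Id` which is skew-symmetric
for the neutral metric `g`, then `dim W` is even. -/
theorem dim_even_of_generalized_complex
    (W : Type*) [AddCommGroup W] [Module ℝ W] [FiniteDimensional ℝ W]
    (J : (W × Module.Dual ℝ W) →ₗ[ℝ] (W × Module.Dual ℝ W))
    (hJ2 : J ∘ₗ J = -LinearMap.id)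
    (hskew : ∀ p q : W × Module.Dual ℝ W,
      neutralMetric W p (J q) + neutralMetric W (J p) q = 0) :
    Even (Module.finrank ℝ W) := by
  classical
  set n := Module.finrank ℝ W with hn
  let b : Module.Basis (Fin n) ℝ W := Module.finBasis ℝ W
  let c : Module.Basis (Fin n ⊕ Fin n) ℝ (W × Module.Dual ℝ W) := gcBasis b
  have hMG : LinearMap.toMatrix₂ c c (neutralBilin W) = Matrix.fromBlocks 1 0 0 (-1) :=
    toMatrix_neutralBilin b
  set MJ := LinearMap.toMatrix c c J with hMJ
  set MG := LinearMap.toMatrix₂ c c (neutralBilin W) with hMGdef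
  set MB := LinearMap.toMatrix₂ c c ((neutralBilin W).compl₂ J) with hMBdef
  have hMB : MB = MG * MJ := LinearMap.toMatrix₂_compl₂ c c c (neutralBilin W) J
  -- `MJ` squares to `-1`
  have hMJ2 : MJ * MJ = -1 := by
    have hneg := _root_.map_neg (LinearMap.toMatrix c c)
      (LinearMap.id (R := ℝ) (M := W × Module.Dual ℝ W))
    rw [hMJ, ← LinearMap.toMatrix_comp c c c, hJ2, hneg, LinearMap.toMatrix_id]
  -- the index type has even cardinality
  have hcard : Fintype.card (Fin n ⊕ Fin n) = n + n := by simp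
  have hdetneg : ∀ A : Matrix (Fin n ⊕ Fin n) (Fin n ⊕ Fin n) ℝ, (-A).det = A.det := by
    intro A
    rw [Matrix.det_neg, hcard, Even.neg_one_pow ⟨n, rfl⟩, one_mul]
  -- `MJ` has no real eigenvalues, hence positive determinant
  have hJeig : ∀ t : ℝ, (t • (1 : Matrix (Fin n ⊕ Fin n) (Fin n ⊕ Fin n) ℝ) - MJ).det ≠ 0 := by
    intro t hdet
    rw [← Matrix.exists_mulVec_eq_zero_iff] at hdet
    obtain ⟨v, hv, hv0⟩ := hdet
    rw [Matrix.sub_mulVec, Matrix.smul_mulVec, Matrix.one_mulVec, sub_eq_zero] at hv0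
    have h2 : (MJ * MJ).mulVec v = (t * t) • v := by
      rw [← Matrix.mulVec_mulVec, ← hv0, Matrix.mulVec_smul, ← hv0, smul_smul]
    rw [hMJ2, Matrix.neg_mulVec, Matrix.one_mulVec] at h2
    have h3 : (t * t + 1) • v = 0 := by
      rw [add_smul, one_smul, ← h2]
      abel
    rw [smul_eq_zero] at h3
    rcases h3 with h3 | h3
    · nlinarith
    · exact hv h3
  have hdetJ : 0 < MJ.det := by
    have := det_neg_pos_of_no_eigen MJ hJeig
    rwa [hdetneg] at this
  -- `MB` is skew-symmetric
  have hBskew : MBᵀ = -MB := by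
    ext i j
    have hs := hskew (c j) (c i)
    have hsymm : neutralMetric W (J (c j)) (c i) = neutralMetric W (c i) (J (c j)) := by
      simp [neutralMetric, add_comm]
    rw [hsymm] at hs
    simp only [Matrix.transpose_apply, Matrix.neg_apply, hMBdef, LinearMap.toMatrix₂_apply,
      LinearMap.compl₂_apply]
    show neutralMetric W (c j) (J (c i)) = -(neutralMetric W (c i) (J (c j)))
    linarith
  -- `MB` has no positive real eigenvalues, hence nonnegative determinant
  have hBeig : ∀ t : ℝ, 0 < t →
      (t • (1 : Matrix (Fin n ⊕ Fin n) (Fin n ⊕ Fin n) ℝ) - MB).det ≠ 0 := by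
    intro t ht hdet
    rw [← Matrix.exists_mulVec_eq_zero_iff] at hdet
    obtain ⟨v, hv, hv0⟩ := hdet
    rw [Matrix.sub_mulVec, Matrix.smul_mulVec, Matrix.one_mulVec, sub_eq_zero] at hv0
    have h1 : v ⬝ᵥ MB.mulVec v = t * (v ⬝ᵥ v) := by
      rw [← hv0, dotProduct_smul, smul_eq_mul]
    have h2 : v ⬝ᵥ MB.mulVec v = -(t * (v ⬝ᵥ v)) := by
      rw [Matrix.dotProduct_mulVec, ← Matrix.mulVec_transpose, hBskew, Matrix.neg_mulVec, ← hv0,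
        neg_dotProduct, smul_dotProduct, smul_eq_mul]
    have hvv : v ⬝ᵥ v = 0 := by nlinarith [h1, h2]
    exact hv (dotProduct_self_eq_zero.mp hvv)
  have hdetB : 0 ≤ MB.det := by
    have := det_neg_nonneg_of_no_pos_eigen MB hBeig
    rwa [hdetneg] at this
  -- the determinant of the metric is `(-1) ^ n`
  have hdetG : MG.det = (-1 : ℝ) ^ n := by
    rw [hMG, Matrix.det_fromBlocks_zero₂₁, Matrix.det_one, one_mul, Matrix.det_neg,
      Matrix.det_one, mul_one, Fintype.card_fin]
  -- conclude
  rw [hMB, Matrix.det_mul, hdetG] at hdetB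
  rcases Nat.even_or_odd n with he | ho
  · exact he
  · exfalso
    rw [ho.neg_one_pow] at hdetB
    nlinarith
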